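/- Let m, n be positive integers and let F be a binary image contained in {1,…,m} × {1,…,n} with row sums r_1,…,r_m and column sums c_1,…,c_n. Define b_i = #{j ∈ {1,…,n} : c_j ≥ i} and d_i = b_i − r_i for i = 1,…,m, set d_0 = d_{m+1} = 0, and let L_h be the length of the horizontal boundary of F. Then for every integer t ≥ 0 and every choice of indices 0 ≤ i_1 < i_2 < ⋯ < i_{2t+1} ≤ m+1 one has L_h ≥ 2·r_1 − d_{i_{2t+1}} + d_{i_{2t}} − d_{i_{2t−1}} + ⋯ + d_{i_2} − 2·d_{i_1}. -/

import Mathlib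

/-- The row sum `r i` of a binary image `F`: the number of points of `F` in row `i`. -/
def rowSum (F : Finset (ℤ × ℤ)) (i : ℤ) : ℕ := (F.filter fun p => p.1 = i).card

/-- The column sum `c j` of a binary image `F`: the number of points of `F` in column `j`. -/
def colSum (F : Finset (ℤ × ℤ)) (j : ℤ) : ℕ := (F.filter fun p => p.2 = j).card

/-- The length of the horizontal boundary of `F`: the number of pairs
`((i,j),(i',j'))` with `j = j'`, `|i - i'| = 1`, `(i,j) ∈ F` and `(i',j') ∉ F`. -/
noncomputable def horizBoundaryLen (F : Finset (ℤ × ℤ)) : ℕ :=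
  Set.ncard {q : (ℤ × ℤ) × (ℤ × ℤ) |
    q.1.2 = q.2.2 ∧ |q.1.1 - q.2.1| = 1 ∧ q.1 ∈ F ∧ q.2 ∉ F}


def hind (c i : ℤ) : ℤ := if 1 ≤ i ∧ i ≤ c then 1 else 0

lemma Ico_succ_top {x y : ℤ} (h : x ≤ y) :
    Finset.Ico x (y+1) = insert y (Finset.Ico x y) := by
  ext i; simp [Finset.mem_Ico]; omega


lemma one_le_max {a : ℤ} (h : 1 ≤ a) : 1 ≤ max a 0 := le_trans h (le_max_left _ _)

lemma sum_ge_one {s : Finset ℤ} {v : ℤ → ℤ} (hv : ∀ i, 0 ≤ v i) {p : ℤ}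
    (hp : p ∈ s) (h1 : 1 ≤ v p) : 1 ≤ ∑ i ∈ s, v i :=
  le_trans h1 (Finset.single_le_sum (fun i _ => hv i) hp)

lemma sum_ge_two {s : Finset ℤ} {v : ℤ → ℤ} (hv : ∀ i, 0 ≤ v i) {p q : ℤ}
    (hpq : p ≠ q) (hp : p ∈ s) (hq : q ∈ s) (h1 : 1 ≤ v p) (h2 : 1 ≤ v q) :
    2 ≤ ∑ i ∈ s, v i := by
  have hsub : {p, q} ⊆ s := by
    intro i hi
    rcases Finset.mem_insert.mp hi with h | h
    · rw [h]; exact hp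
    · rw [Finset.mem_singleton.mp h]; exact hq
  calc (2:ℤ) ≤ v p + v q := by omega
    _ = ∑ i ∈ ({p,q} : Finset ℤ), v i := (Finset.sum_pair hpq).symm
    _ ≤ ∑ i ∈ s, v i := Finset.sum_le_sum_of_subset_of_nonneg hsub fun i _ _ => hv i

lemma ex_E6 {f : ℤ → ℤ} {M c : ℤ} (hf01 : ∀ i, f i = 0 ∨ f i = 1)
    (hfhigh : ∀ i, M < i → f i = 0)
    (hc : c = ∑ i ∈ Finset.Ico (1:ℤ) (M+1), f i) (hM : 1 ≤ M)
    (hc1 : 1 ≤ c) (h1 : f 1 = 1) (hk : f c ≤ f (c+1)) :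
    ∃ w y, 1 < w ∧ w < y ∧ y ≤ M ∧ f w = 0 ∧ f y = 1 := by
  have hcM : c ≤ M := by
    rcases hf01 (c) with h | h
    · -- if f c = 0 then from hc bound; easier: generic bound
      calc c = ∑ i ∈ Finset.Ico (1:ℤ) (M+1), f i := hc
        _ ≤ ∑ i ∈ Finset.Ico (1:ℤ) (M+1), 1 :=
            Finset.sum_le_sum fun i _ => by rcases hf01 i with h' | h' <;> omega
        _ = M := by simp [Int.card_Ico]; omega
    · calc c = ∑ i ∈ Finset.Ico (1:ℤ) (M+1), f i := hc
        _ ≤ ∑ i ∈ Finset.Ico (1:ℤ) (M+1), 1 :=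
            Finset.sum_le_sum fun i _ => by rcases hf01 i with h' | h' <;> omega
        _ = M := by simp [Int.card_Ico]; omega
  rcases hf01 c with hfc | hfc
  · -- f c = 0
    have hcne1 : c ≠ 1 := by intro h; rw [h] at hfc; rw [h1] at hfc; omega
    have hex : ∃ y, c < y ∧ y ≤ M ∧ f y = 1 := by
      by_contra hcon
      push_neg at hcon
      have hzero : ∑ i ∈ Finset.Ico (c+1) (M+1), f i = 0 := by
        apply Finset.sum_eq_zero
        intro i hi
        rw [Finset.mem_Ico] at hi
        rcases hf01 i with h | h
        · exact h
        · exact absurd h (by have := hcon i (by omega) (by omega); omega)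
      have hsplit : (∑ i ∈ Finset.Ico (1:ℤ) (M+1), f i)
          = (∑ i ∈ Finset.Ico (1:ℤ) (c+1), f i) + ∑ i ∈ Finset.Ico (c+1) (M+1), f i := by
        rw [← Finset.Ico_union_Ico_eq_Ico (by omega : (1:ℤ) ≤ c+1) (by omega : c+1 ≤ M+1),
          Finset.sum_union (by simp [Finset.disjoint_left, Finset.mem_Ico]; omega)]
      have htop : (∑ i ∈ Finset.Ico (1:ℤ) (c+1), f i)
          = (∑ i ∈ Finset.Ico (1:ℤ) c, f i) + f c := by
        rw [Ico_succ_top hc1, Finset.sum_insert (by simp)]; ring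
      have hbound : (∑ i ∈ Finset.Ico (1:ℤ) c, f i) ≤ c - 1 := by
        calc (∑ i ∈ Finset.Ico (1:ℤ) c, f i) ≤ ∑ i ∈ Finset.Ico (1:ℤ) c, 1 :=
              Finset.sum_le_sum fun i _ => by rcases hf01 i with h' | h' <;> omega
          _ = c - 1 := by simp [Int.card_Ico]; omega
      omega
    obtain ⟨y, hy1, hy2, hy3⟩ := hex
    exact ⟨c, y, by omega, hy1, hy2, hfc, hy3⟩
  · -- f c = 1
    have hfc1 : f (c+1) = 1 := by
      rcases hf01 (c+1) with h | h
      · omega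
      · exact h
    have hc1M : c + 1 ≤ M := by
      by_contra h; push_neg at h; rw [hfhigh (c+1) (by omega)] at hfc1; omega
    have hex : ∃ w, 1 < w ∧ w < c ∧ f w = 0 := by
      by_contra hcon
      push_neg at hcon
      have hall : ∀ i ∈ Finset.Ico (1:ℤ) (c+2), f i = 1 := by
        intro i hi
        rw [Finset.mem_Ico] at hi
        have : i = 1 ∨ (1 < i ∧ i < c) ∨ i = c ∨ i = c + 1 := by omega
        rcases this with h | ⟨ha, hb⟩ | h | h
        · rw [h]; exact h1
        · rcases hf01 i with h' | h'
          · exact absurd h' (by have := hcon i ha hb; omega)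
          · exact h'
        · rw [h]; exact hfc
        · rw [h]; exact hfc1
      have hval : (∑ i ∈ Finset.Ico (1:ℤ) (c+2), f i) = c + 1 := by
        rw [Finset.sum_congr rfl hall]; simp [Int.card_Ico]; omega
      have hsub : (∑ i ∈ Finset.Ico (1:ℤ) (c+2), f i) ≤ ∑ i ∈ Finset.Ico (1:ℤ) (M+1), f i := by
        apply Finset.sum_le_sum_of_subset_of_nonneg
        · apply Finset.Ico_subset_Ico le_rfl; omega
        · intro i _ _; rcases hf01 i with h' | h' <;> omega
      omega
    obtain ⟨w, hw1, hw2, hw3⟩ := hex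
    exact ⟨w, c, hw1, hw2, by omega, hw3, hfc⟩


/-- telescoping sum -/

lemma tele (G : ℤ → ℤ) (x : ℤ) : ∀ (y : ℤ), x ≤ y →
    G x - G y = ∑ i ∈ Finset.Ico x y, (G i - G (i+1)) := by
  refine Int.le_induction ?_ ?_
  · simp
  · intro y hy ih
    rw [Ico_succ_top hy, Finset.sum_insert (by simp)]
    linarith [ih]

lemma diff_le_P (G : ℤ → ℤ) (x y : ℤ) (hxy : x ≤ y) :
    G x - G y ≤ ∑ i ∈ Finset.Ico x y, max (G i - G (i+1)) 0 := by
  rw [tele G x y hxy]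
  exact Finset.sum_le_sum fun i _ => le_max_left _ _

lemma P_nonneg (G : ℤ → ℤ) (x y : ℤ) :
    0 ≤ ∑ i ∈ Finset.Ico x y, max (G i - G (i+1)) 0 :=
  Finset.sum_nonneg fun i _ => le_max_right _ _

lemma P_split (G : ℤ → ℤ) {x y z : ℤ} (h1 : x ≤ y) (h2 : y ≤ z) :
    (∑ i ∈ Finset.Ico x z, max (G i - G (i+1)) 0) =
    (∑ i ∈ Finset.Ico x y, max (G i - G (i+1)) 0) + ∑ i ∈ Finset.Ico y z, max (G i - G (i+1)) 0 :=
  by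
  rw [← Finset.Ico_union_Ico_eq_Ico h1 h2, Finset.sum_union (by
    simp [Finset.disjoint_left, Finset.mem_Ico]; omega)]

lemma P_mono_left (G : ℤ → ℤ) {x y z : ℤ} (h1 : x ≤ y) (h2 : y ≤ z) :
    (∑ i ∈ Finset.Ico y z, max (G i - G (i+1)) 0) ≤ ∑ i ∈ Finset.Ico x z, max (G i - G (i+1)) 0 := by
  rw [P_split G h1 h2]
  have := P_nonneg G x y
  omega

/-- the alternating-sum chain bound -/
lemma chain (G : ℤ → ℤ) (Z : ℤ) : ∀ (t : ℕ) (x : ℕ → ℤ),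
    (∀ s : ℕ, s + 1 < 2*t → x s < x (s+1)) →
    (∀ s : ℕ, s < 2*t → x s ≤ Z) →
    (∑ s ∈ Finset.range t, (G (x (2*s)) - G (x (2*s+1)))) ≤
      ∑ i ∈ Finset.Ico (x 0) Z, max (G i - G (i+1)) 0 := by
  intro t
  induction t with
  | zero => intro x _ _; simpa using P_nonneg G (x 0) Z
  | succ t ih =>
      intro x hmono hZ
      rw [Finset.sum_range_succ']
      have h01 : x 0 < x 1 := hmono 0 (by omega)
      have h1Z : x 1 ≤ Z := hZ 1 (by omega)
      have hfirst : G (x 0) - G (x 1) ≤ ∑ i ∈ Finset.Ico (x 0) (x 1), max (G i - G (i+1)) 0 :=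
        diff_le_P G _ _ (le_of_lt h01)
      have hrest : (∑ s ∈ Finset.range t, (G (x (2*s+2)) - G (x (2*s+2+1)))) ≤
          ∑ i ∈ Finset.Ico (x 1) Z, max (G i - G (i+1)) 0 := by
        rcases Nat.eq_zero_or_pos t with ht | ht
        · subst ht; simpa using P_nonneg G (x 1) Z
        · have h12 : x 1 ≤ x 2 := le_of_lt (hmono 1 (by omega))
          have h2Z : x 2 ≤ Z := hZ 2 (by omega)
          have := ih (fun s => x (s+2)) (fun s hs => hmono (s+2) (by omega))
            (fun s hs => hZ (s+2) (by omega))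
          calc (∑ s ∈ Finset.range t, (G (x (2*s+2)) - G (x (2*s+2+1))))
              = ∑ s ∈ Finset.range t, (G (x (2*s+2)) - G (x (2*s+3))) := by
                apply Finset.sum_congr rfl; intros; norm_num
            _ ≤ ∑ i ∈ Finset.Ico (x 2) Z, max (G i - G (i+1)) 0 := by
                convert this using 3 <;> ring_nf
            _ ≤ _ := P_mono_left G h12 h2Z
      calc (∑ s ∈ Finset.range t, (G (x (2*(s+1))) - G (x (2*(s+1)+1)))) + (G (x (2*0)) - G (x (2*0+1)))
          ≤ (∑ i ∈ Finset.Ico (x 1) Z, max (G i - G (i+1)) 0) + ∑ i ∈ Finset.Ico (x 0) (x 1), max (G i - G (i+1)) 0 := by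
            have : (∑ s ∈ Finset.range t, (G (x (2*(s+1))) - G (x (2*(s+1)+1)))) = ∑ s ∈ Finset.range t, (G (x (2*s+2)) - G (x (2*s+2+1))) := by
              apply Finset.sum_congr rfl; intro s _; ring_nf
            rw [this]; simpa using add_le_add hrest hfirst
        _ = ∑ i ∈ Finset.Ico (x 0) Z, max (G i - G (i+1)) 0 := by
            rw [P_split G (le_of_lt h01) h1Z]; ring

lemma ex_runend_before {f : ℤ → ℤ} (hf01 : ∀ i, f i = 0 ∨ f i = 1)
    {x w : ℤ} (hx : f x = 1) (hw : f w = 0) (hxw : x < w) :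
    ∃ e, x ≤ e ∧ e < w ∧ f e = 1 ∧ f (e+1) = 0 := by
  classical
  set s := (Finset.Ioc x w).filter (fun i => f i = 0) with hs
  have hne : s.Nonempty := ⟨w, by simp [hs, Finset.mem_Ioc, hxw, hw]⟩
  have hzmem := s.min'_mem hne
  have hzmin := fun i hi => s.min'_le i hi
  set z := s.min' hne with hz
  rw [hs, Finset.mem_filter, Finset.mem_Ioc] at hzmem
  obtain ⟨⟨hxz, hzw⟩, hfz⟩ := hzmem
  refine ⟨z - 1, by omega, by omega, ?_, by simpa using hfz⟩
  rcases eq_or_lt_of_le (by omega : x ≤ z - 1) with h | h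
  · rw [← h]; exact hx
  · rcases hf01 (z-1) with h0 | h1
    · exfalso
      have : z - 1 ∈ s := by
        rw [hs, Finset.mem_filter, Finset.mem_Ioc]; exact ⟨⟨h, by omega⟩, h0⟩
      have := hzmin _ this
      omega
    · exact h1

lemma ex_upbefore {f : ℤ → ℤ} (hf01 : ∀ i, f i = 0 ∨ f i = 1)
    {z x : ℤ} (hz : f z = 0) (hx : f x = 1) (hzx : z < x) :
    ∃ p, z ≤ p ∧ p < x ∧ f p = 0 ∧ f (p+1) = 1 := by
  classical
  set s := (Finset.Ioc z x).filter (fun i => f i = 1) with hs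
  have hne : s.Nonempty := ⟨x, by simp [hs, Finset.mem_Ioc, hzx, hx]⟩
  have hwmem := s.min'_mem hne
  have hwmin := fun i hi => s.min'_le i hi
  set w := s.min' hne with hwdef
  rw [hs, Finset.mem_filter, Finset.mem_Ioc] at hwmem
  obtain ⟨⟨hzw, hwx⟩, hfw⟩ := hwmem
  refine ⟨w - 1, by omega, by omega, ?_, by simpa using hfw⟩
  rcases eq_or_lt_of_le (by omega : z ≤ w - 1) with h | h
  · rw [← h]; exact hz
  · rcases hf01 (w-1) with h0 | h1
    · exact h0
    · exfalso
      have : w - 1 ∈ s := by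
        rw [hs, Finset.mem_filter, Finset.mem_Ioc]; exact ⟨⟨h, by omega⟩, h1⟩
      have := hwmin _ this
      omega

lemma c_upper {f : ℤ → ℤ} {M c : ℤ} (hf01 : ∀ i, f i = 0 ∨ f i = 1)
    (hc : c = ∑ i ∈ Finset.Ico (1:ℤ) (M+1), f i) (hM : 0 ≤ M) : 0 ≤ c ∧ c ≤ M := by
  constructor
  · rw [hc]; exact Finset.sum_nonneg fun i _ => by rcases hf01 i with h | h <;> omega
  · rw [hc]
    calc (∑ i ∈ Finset.Ico (1:ℤ) (M+1), f i) ≤ ∑ i ∈ Finset.Ico (1:ℤ) (M+1), 1 :=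
          Finset.sum_le_sum fun i _ => by rcases hf01 i with h | h <;> omega
      _ = M := by simp [Int.card_Ico]; omega

lemma ex_one {f : ℤ → ℤ} {M c : ℤ} (hf01 : ∀ i, f i = 0 ∨ f i = 1)
    (hc : c = ∑ i ∈ Finset.Ico (1:ℤ) (M+1), f i) (hc1 : 1 ≤ c) :
    ∃ x, f x = 1 ∧ 1 ≤ x ∧ x ≤ M := by
  by_contra hcon
  push_neg at hcon
  have : ∀ i ∈ Finset.Ico (1:ℤ) (M+1), f i = 0 := by
    intro i hi
    rw [Finset.mem_Ico] at hi
    rcases hf01 i with h | h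
    · exact h
    · have := hcon i h hi.1; omega
  rw [Finset.sum_eq_zero this] at hc
  omega

lemma ex_hole {f : ℤ → ℤ} {M c : ℤ} (hf01 : ∀ i, f i = 0 ∨ f i = 1)
    (hflow : ∀ i, i ≤ 0 → f i = 0)
    (hfhigh : ∀ i, M < i → f i = 0)
    (hc : c = ∑ i ∈ Finset.Ico (1:ℤ) (M+1), f i)
    {x : ℤ} (hx : f x = 1) (hcx : c < x) : ∃ z, 1 ≤ z ∧ z < x ∧ f z = 0 := by
  by_contra hcon
  push_neg at hcon
  have hxM : x ≤ M := by
    by_contra h; push_neg at h; rw [hfhigh x h] at hx; omega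
  have hall : ∀ i ∈ Finset.Ico (1:ℤ) (x+1), f i = 1 := by
    intro i hi
    rw [Finset.mem_Ico] at hi
    rcases eq_or_lt_of_le (by omega : i ≤ x) with h | h
    · rw [h]; exact hx
    · rcases hf01 i with h0 | h1
      · exact absurd h0 (by have := hcon i hi.1 h; omega)
      · exact h1
  have hsub : (∑ i ∈ Finset.Ico (1:ℤ) (x+1), f i) ≤ ∑ i ∈ Finset.Ico (1:ℤ) (M+1), f i := by
    apply Finset.sum_le_sum_of_subset_of_nonneg
    · apply Finset.Ico_subset_Ico le_rfl; omega
    · intro i _ _; rcases hf01 i with h | h <;> omega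
  have hx1 : 1 ≤ x := by
    by_contra h; push_neg at h
    rw [hflow x (by omega)] at hx; omega
  have : (∑ i ∈ Finset.Ico (1:ℤ) (x+1), f i) = x := by
    rw [Finset.sum_congr rfl hall]
    simp [Int.card_Ico]; omega
  omega

lemma keycase {f : ℤ → ℤ} {M c : ℤ} (hf01 : ∀ i, f i = 0 ∨ f i = 1)
    (hflow : ∀ i, i ≤ 0 → f i = 0) (hfhigh : ∀ i, M < i → f i = 0)
    (hc : c = ∑ i ∈ Finset.Ico (1:ℤ) (M+1), f i) (hM : 1 ≤ M)
    {a : ℤ} (ha0 : 0 ≤ a) (haM : a ≤ M) :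
    2 * f 1 + 2 * f a - 2 * hind c a + (if a + 1 ≤ c ∧ f c ≤ f (c+1) then 1 else 0)
      ≤ (∑ i ∈ Finset.Ico (0:ℤ) (a+1), max (f (i+1) - f i) 0)
        + ∑ i ∈ Finset.Ico (0:ℤ) (M+1), max (f i - f (i+1)) 0 := by
  classical
  obtain ⟨hc0, hcM⟩ := c_upper hf01 hc (by omega)
  have hf0 : f 0 = 0 := hflow 0 le_rfl
  have hfM1 : f (M+1) = 0 := hfhigh _ (by omega)
  set U := (∑ i ∈ Finset.Ico (0:ℤ) (a+1), max (f (i+1) - f i) 0) with hU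
  set D := (∑ i ∈ Finset.Ico (0:ℤ) (M+1), max (f i - f (i+1)) 0) with hD
  have hUnn : 0 ≤ U := Finset.sum_nonneg fun i _ => le_max_right _ _
  have hDnn : 0 ≤ D := Finset.sum_nonneg fun i _ => le_max_right _ _
  -- supply lemmas
  have hxM : ∀ x : ℤ, f x = 1 → 1 ≤ x ∧ x ≤ M := by
    intro x hx
    constructor
    · by_contra h; push_neg at h; rw [hflow x (by omega)] at hx; omega
    · by_contra h; push_neg at h; rw [hfhigh x (by omega)] at hx; omega
  have hDone : ∀ x : ℤ, f x = 1 → 1 ≤ D := by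
    intro x hx
    obtain ⟨hx1, hxM'⟩ := hxM x hx
    obtain ⟨e, he1, he2, he3, he4⟩ := ex_runend_before hf01 hx hfM1 (by omega)
    rw [hD]
    exact sum_ge_one (p := e) (fun i => le_max_right _ _) (Finset.mem_Ico.mpr ⟨by omega, by omega⟩)
      (one_le_max (by omega))
  have hDtwo : ∀ w y : ℤ, 1 < w → w < y → y ≤ M → f w = 0 → f y = 1 → f 1 = 1 → 2 ≤ D := by
    intro w y hw hwy hyM hfw hfy hf1
    obtain ⟨e1, he11, he12, he13, he14⟩ := ex_runend_before hf01 hf1 hfw hw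
    obtain ⟨e2, he21, he22, he23, he24⟩ := ex_runend_before hf01 hfy hfM1 (by omega)
    rw [hD]
    refine sum_ge_two (p := e1) (q := e2) (fun i => le_max_right _ _) (by omega : e1 ≠ e2)
      (Finset.mem_Ico.mpr ⟨by omega, by omega⟩) (Finset.mem_Ico.mpr ⟨by omega, by omega⟩)
      (one_le_max (by omega)) (one_le_max (by omega))
  have hUzero : f 1 = 1 → 1 ≤ U ∧ 1 ≤ max (f (0+1) - f 0) 0 := by
    intro h1
    have hm : 1 ≤ max (f (0+1) - f 0) 0 := one_le_max (by norm_num; omega)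
    refine ⟨?_, hm⟩
    rw [hU]
    exact sum_ge_one (p := 0) (fun i => le_max_right _ _) (Finset.mem_Ico.mpr ⟨le_rfl, by omega⟩) hm
  -- characterization of hind and kappa
  have hhind : hind c a = (if 1 ≤ a ∧ a ≤ c then 1 else 0) := rfl
  rcases hf01 1 with h1 | h1 <;> rcases hf01 a with hA | hA
  · -- f 1 = 0, f a = 0
    rw [hhind]
    split_ifs with hi hk hk
    · omega
    · omega
    · -- hind = 0, kappa = 1
      obtain ⟨x, hx, _, _⟩ := ex_one hf01 hc (by omega)
      have := hDone x hx
      omega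
    · omega
  · -- f 1 = 0, f a = 1
    have hD1 := hDone a hA
    obtain ⟨ha1, haM'⟩ := hxM a hA
    rw [hhind]
    split_ifs with hi hk hk
    · omega
    · omega
    · exact absurd ⟨ha1, by omega⟩ hi
    · have hca : c < a := by
        rcases (not_and_or.mp hi) with h | h
        · omega
        · omega
      obtain ⟨z, hz1, hz2, hz3⟩ := ex_hole hf01 hflow hfhigh hc hA hca
      obtain ⟨p, hp1, hp2, hp3, hp4⟩ := ex_upbefore hf01 hz3 hA hz2
      have hU1 : 1 ≤ U := by
        rw [hU]
        exact sum_ge_one (p := p) (fun i => le_max_right _ _)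
          (Finset.mem_Ico.mpr ⟨by omega, by omega⟩) (one_le_max (by omega))
      omega
  · -- f 1 = 1, f a = 0
    obtain ⟨hU1, -⟩ := hUzero h1
    rw [hhind]
    split_ifs with hi hk hk
    · omega
    · omega
    · -- hind = 0, kappa = 1
      obtain ⟨w, y, hw1, hw2, hw3, hw4, hw5⟩ := ex_E6 hf01 hfhigh hc hM (by omega) h1 hk.2
      have := hDtwo w y hw1 hw2 hw3 hw4 hw5 h1
      omega
    · have hD1 := hDone 1 h1
      omega
  · -- f 1 = 1, f a = 1
    obtain ⟨ha1, haM'⟩ := hxM a hA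
    obtain ⟨hU1, hUat0⟩ := hUzero h1
    rw [hhind]
    split_ifs with hi hk hk
    · -- hind = 1, kappa = 1 : need 3
      obtain ⟨w, y, hw1, hw2, hw3, hw4, hw5⟩ := ex_E6 hf01 hfhigh hc hM (by omega) h1 hk.2
      have := hDtwo w y hw1 hw2 hw3 hw4 hw5 h1
      omega
    · -- kappa = 0, hind = 1 : need 2
      have hD1 := hDone a hA
      omega
    · exact absurd ⟨ha1, by omega⟩ hi
    · -- hind = 0 : c < a, need 4
      have hca : c < a := by
        rcases (not_and_or.mp hi) with h | h
        · omega
        · omega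
      obtain ⟨z, hz1, hz2, hz3⟩ := ex_hole hf01 hflow hfhigh hc hA hca
      have hz1' : 1 < z := by
        rcases eq_or_lt_of_le hz1 with h | h
        · exfalso; rw [← h] at hz3; omega
        · exact h
      obtain ⟨p, hp1, hp2, hp3, hp4⟩ := ex_upbefore hf01 hz3 hA hz2
      have hU2 : 2 ≤ U := by
        rw [hU]
        exact sum_ge_two (p := 0) (q := p) (fun i => le_max_right _ _) (by omega : (0:ℤ) ≠ p)
          (Finset.mem_Ico.mpr ⟨le_rfl, by omega⟩) (Finset.mem_Ico.mpr ⟨by omega, by omega⟩)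
          hUat0 (one_le_max (by omega))
      obtain ⟨e1, he11, he12, he13, he14⟩ := ex_runend_before hf01 h1 hz3 hz1'
      obtain ⟨e2, he21, he22, he23, he24⟩ := ex_runend_before hf01 hA hfM1 (by omega)
      have hD2 : 2 ≤ D := by
        rw [hD]
        exact sum_ge_two (p := e1) (q := e2) (fun i => le_max_right _ _) (by omega : e1 ≠ e2)
          (Finset.mem_Ico.mpr ⟨by omega, by omega⟩) (Finset.mem_Ico.mpr ⟨by omega, by omega⟩)
          (one_le_max (by omega)) (one_le_max (by omega))
      omega

lemma Pbound {f : ℤ → ℤ} {c : ℤ} (hf01 : ∀ i, f i = 0 ∨ f i = 1) (x Z : ℤ) (hx : 1 ≤ x) :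
    (∑ i ∈ Finset.Ico x Z, max ((hind c i - f i) - (hind c (i+1) - f (i+1))) 0)
      ≤ (∑ i ∈ Finset.Ico x Z, max (f (i+1) - f i) 0)
        + (if x ≤ c ∧ f c ≤ f (c+1) then 1 else 0) := by
  classical
  have hpt : ∀ i ∈ Finset.Ico x Z,
      max ((hind c i - f i) - (hind c (i+1) - f (i+1))) 0
        ≤ max (f (i+1) - f i) 0 + (if i = c ∧ f c ≤ f (c+1) then 1 else 0) := by
    intro i hi
    have hi1 : 1 ≤ i := le_trans hx (Finset.mem_Ico.mp hi).1
    have hRnn : (0:ℤ) ≤ max (f (i+1) - f i) 0 + (if i = c ∧ f c ≤ f (c+1) then 1 else 0) := by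
      have := le_max_right (f (i+1) - f i) 0
      split_ifs <;> omega
    rcases max_choice ((hind c i - f i) - (hind c (i+1) - f (i+1))) 0 with hmx | hmx
    · rw [hmx]
      by_cases hic : i = c
      · have h1 : hind c i = 1 := by unfold hind; split_ifs <;> omega
        have h2 : hind c (i+1) = 0 := by unfold hind; split_ifs <;> omega
        by_cases hfc : f c ≤ f (c+1)
        · have := le_max_left (f (i+1) - f i) 0
          rw [h1, h2, if_pos ⟨hic, hfc⟩]
          omega
        · rw [h1, h2, if_neg (by tauto)]
          have hfc' : ¬ f i ≤ f (i+1) := by rw [hic]; exact hfc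
          have := le_max_right (f (i+1) - f i) 0
          rcases hf01 i with ha | ha <;> rcases hf01 (i+1) with hb | hb <;> omega
      · have heq : hind c i = hind c (i+1) := by unfold hind; split_ifs <;> omega
        have := le_max_left (f (i+1) - f i) 0
        split_ifs <;> omega
    · rw [hmx]; exact hRnn
  calc (∑ i ∈ Finset.Ico x Z, max ((hind c i - f i) - (hind c (i+1) - f (i+1))) 0)
      ≤ ∑ i ∈ Finset.Ico x Z,
          (max (f (i+1) - f i) 0 + (if i = c ∧ f c ≤ f (c+1) then 1 else 0)) :=
        Finset.sum_le_sum hpt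
    _ = (∑ i ∈ Finset.Ico x Z, max (f (i+1) - f i) 0)
        + ∑ i ∈ Finset.Ico x Z, (if i = c ∧ f c ≤ f (c+1) then (1:ℤ) else 0) :=
        Finset.sum_add_distrib
    _ ≤ _ := by
        gcongr
        by_cases hQ : f c ≤ f (c+1)
        · have hrw : ∀ i, (if i = c ∧ f c ≤ f (c+1) then (1:ℤ) else 0) = if i = c then 1 else 0 :=
            fun i => by simp [hQ]
          rw [Finset.sum_congr rfl fun i _ => hrw i, Finset.sum_ite_eq' (Finset.Ico x Z) c (fun _ => (1:ℤ))]
          split_ifs with h1 h2 h2 <;> simp_all [Finset.mem_Ico] <;> omega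
        · simp [hQ]

lemma percol {f : ℤ → ℤ} {M c : ℤ} (hf01 : ∀ i, f i = 0 ∨ f i = 1)
    (hflow : ∀ i, i ≤ 0 → f i = 0) (hfhigh : ∀ i, M < i → f i = 0)
    (hc : c = ∑ i ∈ Finset.Ico (1:ℤ) (M+1), f i) (hM : 1 ≤ M)
    (t : ℕ) (a : ℕ → ℤ)
    (hmono : ∀ s u : ℕ, s < u → u ≤ 2*t → a s < a u)
    (hrange : ∀ s : ℕ, s ≤ 2*t → 0 ≤ a s ∧ a s ≤ M+1) :
    2 * f 1 + (∑ s ∈ Finset.range t,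
        ((hind c (a (2*s+1)) - f (a (2*s+1))) - (hind c (a (2*s+2)) - f (a (2*s+2)))))
      - 2 * (hind c (a 0) - f (a 0))
      ≤ (∑ i ∈ Finset.Ico (0:ℤ) (M+1), max (f (i+1) - f i) 0)
        + (∑ i ∈ Finset.Ico (0:ℤ) (M+1), max (f i - f (i+1)) 0) := by
  classical
  obtain ⟨hc0, hcM⟩ := c_upper hf01 hc (by omega)
  obtain ⟨ha00, ha0M⟩ := hrange 0 (by omega)
  set g : ℤ → ℤ := fun i => hind c i - f i with hg
  have hUnn : ∀ x y : ℤ, 0 ≤ ∑ i ∈ Finset.Ico x y, max (f (i+1) - f i) 0 :=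
    fun x y => Finset.sum_nonneg fun i _ => le_max_right _ _
  by_cases htop : a 0 = M + 1
  · -- then t = 0
    have ht0 : t = 0 := by
      by_contra h
      have h1 := hmono 0 1 (by omega) (by omega)
      have := (hrange 1 (by omega)).2
      omega
    subst ht0
    simp only [Finset.range_zero, Finset.sum_empty, add_zero]
    have h1 : hind c (a 0) = 0 := by unfold hind; split_ifs <;> omega
    have h2 : f (a 0) = 0 := hfhigh _ (by omega)
    rw [h1, h2]
    have hkey := keycase hf01 hflow hfhigh hc hM (le_refl (0:ℤ)) (by omega : (0:ℤ) ≤ M)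
    have hf0 : f 0 = 0 := hflow 0 le_rfl
    have h3 : hind c 0 = 0 := by unfold hind; split_ifs <;> omega
    rw [hf0, h3] at hkey
    have hsub : (∑ i ∈ Finset.Ico (0:ℤ) (0+1), max (f (i+1) - f i) 0)
        ≤ ∑ i ∈ Finset.Ico (0:ℤ) (M+1), max (f (i+1) - f i) 0 := by
      apply Finset.sum_le_sum_of_subset_of_nonneg
      · apply Finset.Ico_subset_Ico le_rfl; omega
      · intro i _ _; exact le_max_right _ _
    have hknn : (0:ℤ) ≤ (if (0:ℤ) + 1 ≤ c ∧ f c ≤ f (c+1) then 1 else 0) := by positivity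
    omega
  · have ha0M' : a 0 ≤ M := by omega
    -- Step 1+2 : chain bound
    have hmid : (∑ s ∈ Finset.range t, (g (a (2*s+1)) - g (a (2*s+2))))
        ≤ ∑ i ∈ Finset.Ico (a 0 + 1) (M+1), max (g i - g (i+1)) 0 := by
      rcases Nat.eq_zero_or_pos t with ht | ht
      · subst ht; simpa using P_nonneg g (a 0 + 1) (M+1)
      · have hchain := chain g (M+1) t (fun s => a (s+1))
          (fun s hs => hmono (s+1) (s+2) (by omega) (by omega))
          (fun s hs => (hrange (s+1) (by omega)).2)
        have hre : (∑ s ∈ Finset.range t, (g (a (2*s+1)) - g (a (2*s+2))))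
            = ∑ s ∈ Finset.range t, (g ((fun s => a (s+1)) (2*s)) - g ((fun s => a (s+1)) (2*s+1))) := by
          apply Finset.sum_congr rfl
          intro s _
          have e1 : 2*s+1 = 2*s + 1 := rfl
          have e2 : (2*s) + 1 = 2*s+1 := rfl
          norm_num
        rw [hre]
        refine le_trans hchain (P_mono_left g ?_ ?_)
        · show a 0 + 1 ≤ a 1
          have := hmono 0 1 (by omega) (by omega); omega
        · show a 1 ≤ M + 1
          exact (hrange 1 (by omega)).2
    have hPb := Pbound (c := c) hf01 (a 0 + 1) (M+1) (by omega)
    have hkey := keycase hf01 hflow hfhigh hc hM ha00 ha0M'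
    have hsplitU : (∑ i ∈ Finset.Ico (0:ℤ) (a 0+1), max (f (i+1) - f i) 0)
        + (∑ i ∈ Finset.Ico (a 0+1) (M+1), max (f (i+1) - f i) 0)
        = ∑ i ∈ Finset.Ico (0:ℤ) (M+1), max (f (i+1) - f i) 0 := by
      rw [← Finset.Ico_union_Ico_eq_Ico (by omega : (0:ℤ) ≤ a 0 + 1) (by omega : a 0 + 1 ≤ M+1),
        Finset.sum_union (by simp [Finset.disjoint_left, Finset.mem_Ico]; omega)]
    have hgnn : (∑ i ∈ Finset.Ico (a 0 + 1) (M+1), max (g i - g (i+1)) 0)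
        = ∑ i ∈ Finset.Ico (a 0 + 1) (M+1), max ((hind c i - f i) - (hind c (i+1) - f (i+1))) 0 := rfl
    rw [hgnn] at hmid
    have hga0 : g (a 0) = hind c (a 0) - f (a 0) := rfl
    linarith [hmid, hPb, hkey]

lemma hbl_eq (F : Finset (ℤ × ℤ)) :
    (horizBoundaryLen F : ℤ) = ((F.filter fun p => (p.1+1, p.2) ∉ F).card : ℤ)
      + ((F.filter fun p => (p.1-1, p.2) ∉ F).card : ℤ) := by
  classical
  set E1 := (F.filter fun p => (p.1+1, p.2) ∉ F).image
    (fun p : ℤ × ℤ => (p, (p.1+1, p.2))) with hE1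
  set E2 := (F.filter fun p => (p.1-1, p.2) ∉ F).image
    (fun p : ℤ × ℤ => (p, (p.1-1, p.2))) with hE2
  have hset : {q : (ℤ × ℤ) × (ℤ × ℤ) |
      q.1.2 = q.2.2 ∧ |q.1.1 - q.2.1| = 1 ∧ q.1 ∈ F ∧ q.2 ∉ F} = ↑(E1 ∪ E2) := by
    ext ⟨⟨i,j⟩, ⟨i',j'⟩⟩
    simp only [Set.mem_setOf_eq, Finset.coe_union, Set.mem_union, Finset.mem_coe,
      Finset.mem_image, Finset.mem_filter, hE1, hE2]
    constructor
    · rintro ⟨hj, habs, hmem, hnot⟩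
      rcases (abs_eq (by norm_num : (0:ℤ) ≤ 1)).mp habs with h | h
      · -- i' = i - 1
        right
        refine ⟨(i,j), ⟨hmem, ?_⟩, ?_⟩
        · show (i - 1, j) ∉ F
          have h1 : (i - 1 : ℤ) = i' := by omega
          rw [h1, hj]
          exact hnot
        · show ((i,j), (i - 1, j)) = ((i,j),(i',j'))
          have h1 : (i - 1 : ℤ) = i' := by omega
          rw [h1, hj]
      · -- i' = i + 1
        left
        refine ⟨(i,j), ⟨hmem, ?_⟩, ?_⟩
        · show (i + 1, j) ∉ F
          have h1 : (i + 1 : ℤ) = i' := by omega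
          rw [h1, hj]
          exact hnot
        · show ((i,j), (i + 1, j)) = ((i,j),(i',j'))
          have h1 : (i + 1 : ℤ) = i' := by omega
          rw [h1, hj]
    · rintro (⟨⟨pi, pj⟩, ⟨hp, hnp⟩, heq⟩ | ⟨⟨pi, pj⟩, ⟨hp, hnp⟩, heq⟩)
      · obtain ⟨hq1, hq2⟩ := Prod.ext_iff.mp heq
        obtain ⟨hq1a, hq1b⟩ := Prod.ext_iff.mp hq1
        obtain ⟨hq2a, hq2b⟩ := Prod.ext_iff.mp hq2
        simp only at hq1a hq1b hq2a hq2b hp hnp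
        refine ⟨by omega, ?_, ?_, ?_⟩
        · have h : i - i' = -1 := by omega
          rw [h]; norm_num
        · rw [← hq1a, ← hq1b]; exact hp
        · have h : (i', j') = (pi + 1, pj) := Prod.ext_iff.mpr ⟨by omega, by omega⟩
          rw [h]; exact hnp
      · obtain ⟨hq1, hq2⟩ := Prod.ext_iff.mp heq
        obtain ⟨hq1a, hq1b⟩ := Prod.ext_iff.mp hq1
        obtain ⟨hq2a, hq2b⟩ := Prod.ext_iff.mp hq2
        simp only at hq1a hq1b hq2a hq2b hp hnp
        refine ⟨by omega, ?_, ?_, ?_⟩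
        · have h : i - i' = 1 := by omega
          rw [h]; norm_num
        · rw [← hq1a, ← hq1b]; exact hp
        · have h : (i', j') = (pi - 1, pj) := Prod.ext_iff.mpr ⟨by omega, by omega⟩
          rw [h]; exact hnp
  have hdisj : Disjoint E1 E2 := by
    rw [Finset.disjoint_left]
    rintro q hq1 hq2
    rw [hE1, Finset.mem_image] at hq1
    rw [hE2, Finset.mem_image] at hq2
    obtain ⟨p, _, hp⟩ := hq1
    obtain ⟨p', _, hp'⟩ := hq2
    rw [← hp'] at hp
    obtain ⟨h1, h2⟩ := Prod.ext_iff.mp hp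
    simp only at h1 h2
    subst h1
    obtain ⟨h3, -⟩ := Prod.ext_iff.mp h2
    simp at h3
    omega
  have hinj1 : Function.Injective (fun p : ℤ × ℤ => (p, (p.1+1, p.2))) :=
    fun a b h => (Prod.ext_iff.mp h).1
  have hinj2 : Function.Injective (fun p : ℤ × ℤ => (p, (p.1-1, p.2))) :=
    fun a b h => (Prod.ext_iff.mp h).1
  rw [horizBoundaryLen, hset, Set.ncard_coe_finset,
    Finset.card_union_of_disjoint hdisj, hE1, hE2,
    Finset.card_image_of_injective _ hinj1, Finset.card_image_of_injective _ hinj2]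
  push_cast
  ring


def colInd (F : Finset (ℤ × ℤ)) (j i : ℤ) : ℤ := if (i, j) ∈ F then 1 else 0

lemma point_card (F : Finset (ℤ × ℤ)) (i j : ℤ) :
    ((F.filter fun p => p.1 = i ∧ p.2 = j).card : ℤ) = colInd F j i := by
  classical
  have h : (F.filter fun p => p.1 = i ∧ p.2 = j) = F.filter (fun p => p = (i,j)) := by
    ext p; simp [Prod.ext_iff]
  rw [h, Finset.filter_eq']
  unfold colInd
  split_ifs <;> simp

lemma rowSum_eq (F : Finset (ℤ × ℤ)) (N : ℤ) (hF2 : ∀ p ∈ F, p.2 ∈ Finset.Icc 1 N) (i : ℤ) :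
    (rowSum F i : ℤ) = ∑ j ∈ Finset.Icc (1:ℤ) N, colInd F j i := by
  classical
  unfold rowSum
  rw [Finset.card_eq_sum_card_fiberwise
    (f := fun p => p.2) (t := Finset.Icc (1:ℤ) N)
    (fun p hp => hF2 p (Finset.mem_filter.mp hp).1)]
  push_cast
  apply Finset.sum_congr rfl
  intro j _
  rw [Finset.filter_filter, ← point_card F i j]

lemma colSum_eq (F : Finset (ℤ × ℤ)) (M : ℤ) (hF1 : ∀ p ∈ F, p.1 ∈ Finset.Icc 1 M) (j : ℤ) :
    (colSum F j : ℤ) = ∑ i ∈ Finset.Ico (1:ℤ) (M+1), colInd F j i := by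
  classical
  unfold colSum
  rw [Finset.card_eq_sum_card_fiberwise
    (f := fun p => p.1) (t := Finset.Ico (1:ℤ) (M+1))
    (fun p hp => by
      have := hF1 p (Finset.mem_filter.mp hp).1
      rw [Finset.mem_Icc] at this
      show p.1 ∈ Finset.Ico (1:ℤ) (M+1)
      rw [Finset.mem_Ico]
      omega)]
  push_cast
  apply Finset.sum_congr rfl
  intro i _
  rw [Finset.filter_filter, ← point_card F i j]
  congr 2
  ext p
  simp only [Finset.mem_filter]
  tauto

lemma colSum_le (F : Finset (ℤ × ℤ)) (M : ℤ) (hM : 0 ≤ M)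
    (hF1 : ∀ p ∈ F, p.1 ∈ Finset.Icc 1 M) (j : ℤ) : (colSum F j : ℤ) ≤ M := by
  rw [colSum_eq F M hF1 j]
  calc (∑ i ∈ Finset.Ico (1:ℤ) (M+1), colInd F j i)
      ≤ ∑ i ∈ Finset.Ico (1:ℤ) (M+1), 1 := by
        apply Finset.sum_le_sum
        intro i _
        unfold colInd; split_ifs <;> omega
    _ = M := by simp [Int.card_Ico]; omega

lemma dn_le (F : Finset (ℤ × ℤ)) (M j : ℤ) :
    (∑ i ∈ Finset.Ico (0:ℤ) (M+1), max (colInd F j i - colInd F j (i+1)) 0)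
      ≤ (((F.filter fun p => (p.1+1, p.2) ∉ F).filter fun p => p.2 = j).card : ℤ) := by
  classical
  have hpt : ∀ i ∈ Finset.Ico (0:ℤ) (M+1),
      max (colInd F j i - colInd F j (i+1)) 0
        = if (i, j) ∈ F ∧ (i+1, j) ∉ F then (1:ℤ) else 0 := by
    intro i _
    unfold colInd
    by_cases h1 : (i, j) ∈ F <;> by_cases h2 : (i+1, j) ∈ F <;> simp [h1, h2]
  rw [Finset.sum_congr rfl hpt, Finset.sum_boole]
  have := Finset.card_le_card_of_injOn (f := fun i : ℤ => (i, j))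
    (s := (Finset.Ico (0:ℤ) (M+1)).filter fun i => (i, j) ∈ F ∧ (i+1, j) ∉ F)
    (t := (F.filter fun p => (p.1+1, p.2) ∉ F).filter fun p => p.2 = j)
    (fun i hi => by
      rw [Finset.mem_coe, Finset.mem_filter] at hi
      simp only [Finset.mem_coe, Finset.mem_filter]
      exact ⟨⟨hi.2.1, hi.2.2⟩, trivial⟩)
    (fun a _ b _ h => (Prod.ext_iff.mp h).1)
  exact_mod_cast this

lemma up_le (F : Finset (ℤ × ℤ)) (M j : ℤ) :
    (∑ i ∈ Finset.Ico (0:ℤ) (M+1), max (colInd F j (i+1) - colInd F j i) 0)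
      ≤ (((F.filter fun p => (p.1-1, p.2) ∉ F).filter fun p => p.2 = j).card : ℤ) := by
  classical
  have hpt : ∀ i ∈ Finset.Ico (0:ℤ) (M+1),
      max (colInd F j (i+1) - colInd F j i) 0
        = if (i+1, j) ∈ F ∧ (i, j) ∉ F then (1:ℤ) else 0 := by
    intro i _
    unfold colInd
    by_cases h1 : (i, j) ∈ F <;> by_cases h2 : (i+1, j) ∈ F <;> simp [h1, h2]
  rw [Finset.sum_congr rfl hpt, Finset.sum_boole]
  have := Finset.card_le_card_of_injOn (f := fun i : ℤ => (i+1, j))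
    (s := (Finset.Ico (0:ℤ) (M+1)).filter fun i => (i+1, j) ∈ F ∧ (i, j) ∉ F)
    (t := (F.filter fun p => (p.1-1, p.2) ∉ F).filter fun p => p.2 = j)
    (fun i hi => by
      rw [Finset.mem_coe, Finset.mem_filter] at hi
      simp only [Finset.mem_coe, Finset.mem_filter]
      refine ⟨⟨hi.2.1, ?_⟩, trivial⟩
      simpa using hi.2.2)
    (fun a _ b _ h => by have := (Prod.ext_iff.mp h).1; simpa using this)
  exact_mod_cast this

/-- Corollary 1, inequality (4): the general lower bound
`L_h ≥ 2 r_1 - d_{i_{2t+1}} + d_{i_{2t}} - d_{i_{2t-1}} + ⋯ + d_{i_2} - 2 d_{i_1}`,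
where `d_0 = d_{m+1} = 0` and indices are chosen from `{0, 1, …, m, m+1}`.
Here `idx 0, idx 1, …, idx (2t)` play the role of `i_1 < i_2 < ⋯ < i_{2t+1}`;
the alternating sum `- d_{i_{2t+1}} + d_{i_{2t}} - ⋯ + d_{i_2}` is written as
`∑_{s < t} (d_{i_{2s+2}} - d_{i_{2s+3}})` (0-based: `d (idx (2s+1)) - d (idx (2s+2))`). -/
theorem boundary_lower_bound_general_two (m n : ℕ) (hm : 0 < m) (hn : 0 < n)
    (F : Finset (ℤ × ℤ))
    (hF : ∀ p ∈ F, p.1 ∈ Finset.Icc (1 : ℤ) (m : ℤ) ∧ p.2 ∈ Finset.Icc (1 : ℤ) (n : ℤ))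
    (b : ℤ → ℕ)
    (hb : ∀ i : ℤ, b i = ((Finset.Icc (1 : ℤ) (n : ℤ)).filter fun j => i ≤ (colSum F j : ℤ)).card)
    (d : ℤ → ℤ)
    (hd : ∀ i : ℤ, 1 ≤ i → i ≤ (m : ℤ) → d i = (b i : ℤ) - (rowSum F i : ℤ))
    (hd0 : d 0 = 0) (hdm1 : d ((m : ℤ) + 1) = 0)
    (t : ℕ) (idx : ℕ → ℤ)
    (hidx_mono : ∀ a b : ℕ, a < b → b ≤ 2 * t → idx a < idx b)
    (hidx_range : ∀ s : ℕ, s ≤ 2 * t → idx s ∈ Finset.Icc (0 : ℤ) ((m : ℤ) + 1)) :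
    (horizBoundaryLen F : ℤ) ≥
      2 * (rowSum F 1 : ℤ)
        + (∑ s ∈ Finset.range t, (d (idx (2 * s + 1)) - d (idx (2 * s + 2))))
        - 2 * d (idx 0) := by
  classical
  have hM1 : (1:ℤ) ≤ (m:ℤ) := by exact_mod_cast hm
  have hF1 : ∀ p ∈ F, p.1 ∈ Finset.Icc (1:ℤ) (m:ℤ) := fun p hp => (hF p hp).1
  have hF2 : ∀ p ∈ F, p.2 ∈ Finset.Icc (1:ℤ) (n:ℤ) := fun p hp => (hF p hp).2
  have hf01 : ∀ j i : ℤ, colInd F j i = 0 ∨ colInd F j i = 1 := fun j i => by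
    unfold colInd; split_ifs <;> simp
  have hflow : ∀ j i : ℤ, i ≤ 0 → colInd F j i = 0 := fun j i hi => by
    unfold colInd
    rw [if_neg]
    intro hmem
    have := hF1 _ hmem
    rw [Finset.mem_Icc] at this
    simp only at this
    omega
  have hfhigh : ∀ j i : ℤ, (m:ℤ) < i → colInd F j i = 0 := fun j i hi => by
    unfold colInd
    rw [if_neg]
    intro hmem
    have := hF1 _ hmem
    rw [Finset.mem_Icc] at this
    simp only at this
    omega
  have hccol : ∀ j : ℤ, ((colSum F j : ℤ)) = ∑ i ∈ Finset.Ico (1:ℤ) ((m:ℤ)+1), colInd F j i :=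
    colSum_eq F _ hF1
  have hidx : ∀ s : ℕ, s ≤ 2*t → 0 ≤ idx s ∧ idx s ≤ (m:ℤ)+1 := fun s hs => by
    have := hidx_range s hs; rw [Finset.mem_Icc] at this; exact this
  have hper : ∀ j : ℤ,
      2 * colInd F j 1 + (∑ s ∈ Finset.range t,
          ((hind ((colSum F j : ℤ)) (idx (2*s+1)) - colInd F j (idx (2*s+1)))
            - (hind ((colSum F j : ℤ)) (idx (2*s+2)) - colInd F j (idx (2*s+2)))))
        - 2 * (hind ((colSum F j : ℤ)) (idx 0) - colInd F j (idx 0))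
      ≤ (∑ i ∈ Finset.Ico (0:ℤ) ((m:ℤ)+1), max (colInd F j (i+1) - colInd F j i) 0)
        + (∑ i ∈ Finset.Ico (0:ℤ) ((m:ℤ)+1), max (colInd F j i - colInd F j (i+1)) 0) :=
    fun j => percol (hf01 j) (hflow j) (hfhigh j) (hccol j) hM1 t idx hidx_mono hidx
  set J := Finset.Icc (1:ℤ) (n:ℤ) with hJ
  -- column sums of the g function give d
  have hd_eq : ∀ i : ℤ, 0 ≤ i → i ≤ (m:ℤ)+1 →
      (∑ j ∈ J, (hind ((colSum F j : ℤ)) i - colInd F j i)) = d i := by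
    intro i hi0 hiM
    by_cases hA : i = 0
    · subst hA
      have hz : (∑ j ∈ J, (hind ((colSum F j : ℤ)) 0 - colInd F j 0)) = 0 := by
        apply Finset.sum_eq_zero
        intro j _
        have h1 : hind ((colSum F j : ℤ)) 0 = 0 := by unfold hind; split_ifs <;> omega
        have h2 : colInd F j 0 = 0 := hflow j 0 le_rfl
        omega
      rw [hz]
      exact hd0.symm
    · by_cases hB : i = (m:ℤ)+1
      · subst hB
        have hz : (∑ j ∈ J, (hind ((colSum F j : ℤ)) ((m:ℤ)+1) - colInd F j ((m:ℤ)+1))) = 0 := by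
          apply Finset.sum_eq_zero
          intro j _
          have hcle := colSum_le F (m:ℤ) (by omega) hF1 j
          have h1 : hind ((colSum F j : ℤ)) ((m:ℤ)+1) = 0 := by
            unfold hind; split_ifs with h
            · exfalso; omega
            · rfl
          have h2 : colInd F j ((m:ℤ)+1) = 0 := hfhigh j _ (by omega)
          omega
        rw [hz]
        exact hdm1.symm
      · -- 1 ≤ i ≤ m
        have hi1 : 1 ≤ i := by omega
        have him : i ≤ (m:ℤ) := by omega
        rw [Finset.sum_sub_distrib]
        have h1 : (∑ j ∈ J, hind ((colSum F j : ℤ)) i) = (b i : ℤ) := by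
          have hrw : ∀ j ∈ J, hind ((colSum F j : ℤ)) i
              = if i ≤ (colSum F j : ℤ) then (1:ℤ) else 0 := by
            intro j _; unfold hind; split_ifs <;> omega
          rw [Finset.sum_congr rfl hrw, Finset.sum_boole, hb i]
        have h2 : (∑ j ∈ J, colInd F j i) = (rowSum F i : ℤ) := (rowSum_eq F _ hF2 i).symm
        rw [h1, h2, hd i hi1 him]
  -- the sum over columns of the per-column LHS equals the global RHS
  have hr1 : (rowSum F 1 : ℤ) = ∑ j ∈ J, colInd F j 1 := rowSum_eq F _ hF2 1
  have hsum_eq : (∑ j ∈ J,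
      (2 * colInd F j 1 + (∑ s ∈ Finset.range t,
          ((hind ((colSum F j : ℤ)) (idx (2*s+1)) - colInd F j (idx (2*s+1)))
            - (hind ((colSum F j : ℤ)) (idx (2*s+2)) - colInd F j (idx (2*s+2)))))
        - 2 * (hind ((colSum F j : ℤ)) (idx 0) - colInd F j (idx 0))))
      = 2 * (rowSum F 1 : ℤ)
        + (∑ s ∈ Finset.range t, (d (idx (2 * s + 1)) - d (idx (2 * s + 2))))
        - 2 * d (idx 0) := by
    rw [Finset.sum_sub_distrib, Finset.sum_add_distrib]
    congr 1
    · congr 1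
      · rw [← Finset.mul_sum, ← hr1]
      · rw [Finset.sum_comm]
        apply Finset.sum_congr rfl
        intro s hs
        rw [Finset.mem_range] at hs
        rw [Finset.sum_sub_distrib,
          hd_eq (idx (2*s+1)) (hidx (2*s+1) (by omega)).1 (hidx (2*s+1) (by omega)).2,
          hd_eq (idx (2*s+2)) (hidx (2*s+2) (by omega)).1 (hidx (2*s+2) (by omega)).2]
    · rw [← Finset.mul_sum, hd_eq (idx 0) (hidx 0 (by omega)).1 (hidx 0 (by omega)).2]
  -- fiberwise decomposition of the boundary count
  have hUfib : ((F.filter fun p => (p.1+1, p.2) ∉ F).card : ℤ)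
      = ∑ j ∈ J, (((F.filter fun p => (p.1+1, p.2) ∉ F).filter fun p => p.2 = j).card : ℤ) := by
    rw [Finset.card_eq_sum_card_fiberwise
      (f := fun p => p.2) (t := J) (fun p hp => hF2 p (Finset.mem_filter.mp hp).1)]
    push_cast
    rfl
  have hDfib : ((F.filter fun p => (p.1-1, p.2) ∉ F).card : ℤ)
      = ∑ j ∈ J, (((F.filter fun p => (p.1-1, p.2) ∉ F).filter fun p => p.2 = j).card : ℤ) := by
    rw [Finset.card_eq_sum_card_fiberwise
      (f := fun p => p.2) (t := J) (fun p hp => hF2 p (Finset.mem_filter.mp hp).1)]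
    push_cast
    rfl
  rw [ge_iff_le, ← hsum_eq, hbl_eq F, hUfib, hDfib, ← Finset.sum_add_distrib]
  apply Finset.sum_le_sum
  intro j hj
  calc 2 * colInd F j 1 + (∑ s ∈ Finset.range t,
          ((hind ((colSum F j : ℤ)) (idx (2*s+1)) - colInd F j (idx (2*s+1)))
            - (hind ((colSum F j : ℤ)) (idx (2*s+2)) - colInd F j (idx (2*s+2)))))
        - 2 * (hind ((colSum F j : ℤ)) (idx 0) - colInd F j (idx 0))
      ≤ (∑ i ∈ Finset.Ico (0:ℤ) ((m:ℤ)+1), max (colInd F j (i+1) - colInd F j i) 0)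
        + (∑ i ∈ Finset.Ico (0:ℤ) ((m:ℤ)+1), max (colInd F j i - colInd F j (i+1)) 0) := hper j
    _ ≤ _ := by
        have h1 := up_le F (m:ℤ) j
        have h2 := dn_le F (m:ℤ) j
        omega
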